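/- Let Q be an m-coloured quiver in the class Q_n^m and let Q' be its 0-coloured part (these Q' are precisely the quivers of m-cluster-tilted algebras of type A_n). Then: (1) every vertex x of Q' is the source of at most two arrows and the target of at most two arrows, i.e. the sets s^{-1}(x) and t^{-1}(x) have cardinality at most two; and (2) the only cycles which can occur in Q' are oriented cycles of length m + 2. -/
import Mathlib


namespace MutClassAn

open Finset

variable {V : Type} [Fintype V] [DecidableEq V]

/-- `M i j c` is the number of arrows from `i` to `j` of colour `c`.
An `m`-coloured quiver has no loops, is monochromatic and skew-symmetric
(`c.rev = m - c` in `Fin (m+1)`). -/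
def IsColouredQuiver {m : ℕ} (M : V → V → Fin (m + 1) → ℕ) : Prop :=
  (∀ i c, M i i c = 0) ∧
  (∀ i j c c', M i j c ≠ 0 → M i j c' ≠ 0 → c = c') ∧
  (∀ i j c, M i j c = M j i c.rev)

/-- A coloured quiver is simple if there is at most one arrow between any two
vertices in each direction. -/
def IsSimpleCQ {m : ℕ} (M : V → V → Fin (m + 1) → ℕ) : Prop :=
  ∀ i j : V, (∑ c, M i j c) ≤ 1

/-- Adjacency in the underlying graph. -/
def CQAdj {m : ℕ} (M : V → V → Fin (m + 1) → ℕ) (i j : V) : Prop :=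
  i ≠ j ∧ ∃ c, M i j c ≠ 0

/-- The colour of the (unique, for simple quivers) arrow from `i` to `j`. -/
def colourOf {m : ℕ} (M : V → V → Fin (m + 1) → ℕ) (i j : V) : ℕ :=
  ∑ c : Fin (m + 1), M i j c * c.val

/-- Buan–Thomas coloured quiver mutation at the vertex `j`. -/
def mutate {m : ℕ} (M : V → V → Fin (m + 1) → ℕ) (j : V) :
    V → V → Fin (m + 1) → ℕ := fun i k c =>
  if k = j then M i k (c + 1)
  else if i = j then M i k (c - 1)
  else ((M i k c : ℤ) - ∑ t ∈ Finset.univ.filter (fun t => t ≠ c), (M i k t : ℤ)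
      + ((M i j c : ℤ) - (M i j (c - 1) : ℤ)) * (M j k 0 : ℤ)
      + (M i j (Fin.last m) : ℤ) * ((M j k c : ℤ) - (M j k (c + 1) : ℤ))).toNat

/-- Mutation equivalence: the equivalence relation generated by single mutations. -/
def MutEquiv {m : ℕ} (M M' : V → V → Fin (m + 1) → ℕ) : Prop :=
  Relation.EqvGen (fun A B => ∃ v, mutate A v = B) M M'

/-- A hole is an induced cycle of length at least `4` in the underlying graph. -/
def HasHole {m : ℕ} (M : V → V → Fin (m + 1) → ℕ) : Prop :=
  ∃ k : ℕ, 4 ≤ k ∧ ∃ x : ZMod k → V, Function.Injective x ∧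
    (∀ i, CQAdj M (x i) (x (i + 1))) ∧
    ∀ i j : ZMod k, i ≠ j → j ≠ i + 1 → i ≠ j + 1 → ¬ CQAdj M (x i) (x j)

/-- A clique: a set of pairwise adjacent vertices. -/
def IsCliqueCQ {m : ℕ} (M : V → V → Fin (m + 1) → ℕ) (S : Set V) : Prop :=
  S.Pairwise (CQAdj M)

/-- The set of neighbours of a vertex. -/
def nbrs {m : ℕ} (M : V → V → Fin (m + 1) → ℕ) (v : V) : Set V :=
  {u | CQAdj M v u}

/-- Connectedness of the underlying graph. -/
def CQConnected {m : ℕ} (M : V → V → Fin (m + 1) → ℕ) : Prop :=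
  ∀ u w : V, Relation.ReflTransGen (CQAdj M) u w

/-- Condition (1) of the class `𝒬ₙᵐ`: the neighbourhood of every vertex is covered
by two cliques of sizes `r, k ≤ m + 2` with `r + k = z + 2`, with no arrows between
the two cliques away from the vertex. -/
def Cond1 {m : ℕ} (M : V → V → Fin (m + 1) → ℕ) : Prop :=
  ∀ v : V, (nbrs M v).Nonempty →
    ∃ R K : Finset V, v ∈ R ∧ v ∈ K ∧ IsCliqueCQ M ↑R ∧ IsCliqueCQ M ↑K ∧
      R.card + K.card = (nbrs M v).ncard + 2 ∧ R.card ≤ m + 2 ∧ K.card ≤ m + 2 ∧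
      (∀ u ∈ nbrs M v, u ∈ R ∨ u ∈ K) ∧
      ∀ a ∈ R, a ≠ v → ∀ b ∈ K, b ≠ v → ¬ CQAdj M a b

/-- Condition (2) of the class `𝒬ₙᵐ`: every triangle inside a clique has colour
sum `m - 1` along one of its two orientations (sums taken in `ℤ`). -/
def Cond2 {m : ℕ} (M : V → V → Fin (m + 1) → ℕ) : Prop :=
  ∀ v1 v2 v3 : V, v1 ≠ v2 → v2 ≠ v3 → v1 ≠ v3 →
    CQAdj M v1 v2 → CQAdj M v2 v3 → CQAdj M v1 v3 →
    ((colourOf M v2 v1 : ℤ) + (colourOf M v1 v3 : ℤ) + (colourOf M v3 v2 : ℤ)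
        = (m : ℤ) - 1 ∨
      ((m : ℤ) - colourOf M v2 v1) + ((m : ℤ) - colourOf M v1 v3)
          + ((m : ℤ) - colourOf M v3 v2) = (m : ℤ) - 1)

/-- Membership in the class `𝒬ₙᵐ` (`n` being the cardinality of the vertex set). -/
def MemQClass {m : ℕ} (M : V → V → Fin (m + 1) → ℕ) : Prop :=
  IsColouredQuiver M ∧ IsSimpleCQ M ∧ CQConnected M ∧ ¬ HasHole M ∧ Cond1 M ∧ Cond2 M

/-- An `Aₙ`-quiver: the underlying graph is the path graph on the vertex set. -/
def IsAnQuiver {m : ℕ} (M : V → V → Fin (m + 1) → ℕ) : Prop :=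
  ∃ e : Fin (Fintype.card V) ≃ V,
    ∀ i j : Fin (Fintype.card V),
      CQAdj M (e i) (e j) ↔ (i.val + 1 = j.val ∨ j.val + 1 = i.val)

/-- The coloured quiver on `Fin n` whose underlying graph is the path
`0 — 1 — ⋯ — (n-1)`, with the arrow `j+1 → j` coloured `c j` and the arrow
`j → j+1` coloured `m - c j`. -/
def pathQuiver (m n : ℕ) (c : ℕ → Fin (m + 1)) :
    Fin n → Fin n → Fin (m + 1) → ℕ := fun i j d =>
  if j.val + 1 = i.val ∧ d = c j.val then 1
  else if i.val + 1 = j.val ∧ d = (c i.val).rev then 1 else 0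

/-- Delete all arrows between vertices of `S`. -/
def deleteArrows {m : ℕ} (M : V → V → Fin (m + 1) → ℕ) (S : Finset V) :
    V → V → Fin (m + 1) → ℕ := fun i j c =>
  if i ∈ S ∧ j ∈ S then 0 else M i j c

/-- The connected component of `u` is an `A_k`-quiver (a path) for some `k ≥ 1`. -/
def ComponentIsPath {m : ℕ} (M : V → V → Fin (m + 1) → ℕ) (u : V) : Prop :=
  ∃ (k : ℕ) (x : Fin k → V), 1 ≤ k ∧ Function.Injective x ∧
    Set.range x = {w | Relation.ReflTransGen (CQAdj M) u w} ∧
    ∀ i j : Fin k, CQAdj M (x i) (x j) ↔ (i.val + 1 = j.val ∨ j.val + 1 = i.val)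

/-- An almost extremal clique: deleting its arrows leaves a connected component
which is an `A_k`-quiver for some `k ≥ 1`. -/
def AlmostExtremalClique {m : ℕ} (M : V → V → Fin (m + 1) → ℕ) (S : Finset V) : Prop :=
  IsCliqueCQ M ↑S ∧ ∃ u : V, ComponentIsPath (deleteArrows M S) u

/-- An extremal clique: deleting its arrows leaves a single-vertex component. -/
def ExtremalClique {m : ℕ} (M : V → V → Fin (m + 1) → ℕ) (S : Finset V) : Prop :=
  IsCliqueCQ M ↑S ∧
    ∃ u : V, {w | Relation.ReflTransGen (CQAdj (deleteArrows M S)) u w} = {u}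

/-- A coloured clique structure on a vertex type: colours `c i j ∈ {0,…,m}` with
skew-symmetry `c j i = m - c i j` and the triangle condition. -/
def IsCliqueColouring (m : ℕ) {W : Type} (c : W → W → ℕ) : Prop :=
  (∀ i j : W, i ≠ j → c i j ≤ m) ∧
  (∀ i j : W, i ≠ j → c i j + c j i = m) ∧
  ∀ i j l : W, i ≠ j → j ≠ l → i ≠ l →
    ((c i j : ℤ) + (c j l : ℤ) + (c l i : ℤ) = (m : ℤ) - 1 ∨
      (c i j : ℤ) + (c j l : ℤ) + (c l i : ℤ) = 2 * (m : ℤ) + 1)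

/-- Cyclic successor in `Fin k`. -/
def cyc {k : ℕ} (i : Fin k) : Fin k :=
  ⟨(i.val + 1) % k, Nat.mod_lt _ i.pos⟩

/-- The weight of the Hamiltonian cycle `x 0 → x 1 → ⋯ → x (k-1) → x 0`:
the sum of the colours of its arrows. -/
def cycleWeight {W : Type} (c : W → W → ℕ) {k : ℕ} (x : Fin k → W) : ℤ :=
  ∑ i : Fin k, (c (x i) (x (cyc i)) : ℤ)

/-- The Hamiltonian cycle on `k+1` vertices obtained from the cycle
`x 0 → ⋯ → x (k-1) → x 0` by inserting the vertex `x (Fin.last k)`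
immediately after `x j`. -/
def insertAfter {W : Type} {k : ℕ} (x : Fin (k + 1) → W) (j : Fin k) :
    Fin (k + 1) → W := fun i =>
  if i = 0 then x (Fin.last k)
  else x (Fin.castSucc ⟨(j.val + i.val) % k, Nat.mod_lt _ j.pos⟩)

set_option linter.unusedSectionVars false
set_option linter.unusedVariables false
set_option maxHeartbeats 1000000

section Basics

variable {m : ℕ} {M : V → V → Fin (m + 1) → ℕ}

lemma adj_symm (hQ : IsColouredQuiver M) {i j : V} (h : CQAdj M i j) : CQAdj M j i := by
  obtain ⟨hne, c, hc⟩ := h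
  refine ⟨hne.symm, c.rev, ?_⟩
  rw [hQ.2.2 j i c.rev, Fin.rev_rev]
  exact hc

lemma colour_le (hs : IsSimpleCQ M) (i j : V) : colourOf M i j ≤ m := by
  calc colourOf M i j = ∑ c : Fin (m+1), M i j c * c.val := rfl
    _ ≤ ∑ c : Fin (m+1), M i j c * m := by
        refine Finset.sum_le_sum fun c _ => Nat.mul_le_mul_left _ ?_
        have := c.isLt; omega
    _ = (∑ c : Fin (m+1), M i j c) * m := (Finset.sum_mul _ _ _).symm
    _ ≤ 1 * m := Nat.mul_le_mul_right _ (hs i j)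
    _ = m := one_mul m

lemma colour_eq (hQ : IsColouredQuiver M) (hs : IsSimpleCQ M) {i j : V} {c : Fin (m+1)}
    (h : M i j c ≠ 0) : colourOf M i j = c.val := by
  have h1 : M i j c = 1 := by
    have hle : M i j c ≤ ∑ d, M i j d :=
      Finset.single_le_sum (fun d _ => Nat.zero_le _) (Finset.mem_univ c)
    have := hs i j
    omega
  have : colourOf M i j = M i j c * c.val := by
    refine Finset.sum_eq_single c (fun d _ hdc => ?_) (fun hc => absurd (Finset.mem_univ c) hc)
    by_cases hd : M i j d = 0
    · rw [hd, zero_mul]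
    · exact absurd (hQ.2.1 i j d c hd h) hdc
  rw [this, h1, one_mul]

lemma colour_add (hQ : IsColouredQuiver M) (hs : IsSimpleCQ M) {i j : V}
    (h : CQAdj M i j) : colourOf M i j + colourOf M j i = m := by
  obtain ⟨hne, c, hc⟩ := h
  have hji : M j i c.rev ≠ 0 := by
    rw [hQ.2.2 j i c.rev, Fin.rev_rev]; exact hc
  rw [colour_eq hQ hs hc, colour_eq hQ hs hji]
  have : c.rev.val = m + 1 - (c.val + 1) := Fin.val_rev c
  have := c.isLt
  omega

lemma adj_of_zero (hQ : IsColouredQuiver M) {i j : V} (h : M i j 0 ≠ 0) : CQAdj M i j := by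
  refine ⟨fun he => h (he ▸ hQ.1 i 0), ⟨0, h⟩⟩

lemma colour_zero (hQ : IsColouredQuiver M) (hs : IsSimpleCQ M) {i j : V}
    (h : M i j 0 ≠ 0) : colourOf M i j = 0 := colour_eq hQ hs h

/-- `fc M i j = colour(i,j) + 1` in `ZMod (m+2)`. -/
def fc (M : V → V → Fin (m + 1) → ℕ) (i j : V) : ZMod (m + 2) :=
  ((colourOf M i j + 1 : ℕ) : ZMod (m + 2))

lemma fc_ne_zero (hs : IsSimpleCQ M) (i j : V) : fc M i j ≠ 0 := by
  intro h
  rw [fc, ZMod.natCast_eq_zero_iff] at h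
  have h1 := Nat.le_of_dvd (by omega) h
  have := colour_le hs i j
  omega

lemma fc_skew (hQ : IsColouredQuiver M) (hs : IsSimpleCQ M) {i j : V}
    (h : CQAdj M i j) : fc M i j + fc M j i = 0 := by
  have hadd := colour_add hQ hs h
  rw [fc, fc, ← Nat.cast_add]
  have : colourOf M i j + 1 + (colourOf M j i + 1) = m + 2 := by omega
  rw [this, ZMod.natCast_self]

lemma fc_tri (hQ : IsColouredQuiver M) (hs : IsSimpleCQ M) (hc2 :
    ∀ v1 v2 v3 : V, v1 ≠ v2 → v2 ≠ v3 → v1 ≠ v3 →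
    CQAdj M v1 v2 → CQAdj M v2 v3 → CQAdj M v1 v3 →
    ((colourOf M v2 v1 : ℤ) + (colourOf M v1 v3 : ℤ) + (colourOf M v3 v2 : ℤ)
        = (m : ℤ) - 1 ∨
      ((m : ℤ) - colourOf M v2 v1) + ((m : ℤ) - colourOf M v1 v3)
          + ((m : ℤ) - colourOf M v3 v2) = (m : ℤ) - 1))
    {a b c : V} (hab : a ≠ b) (hbc : b ≠ c) (hac : a ≠ c)
    (h1 : CQAdj M a b) (h2 : CQAdj M b c) (h3 : CQAdj M a c) :
    fc M a b + fc M b c + fc M c a = 0 := by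
  have H := hc2 b a c hab.symm hac hbc (adj_symm hQ h1) h3 h2
  have hm : ((m : ZMod (m+2))) = -2 := by
    have h0 : ((m + 2 : ℕ) : ZMod (m+2)) = 0 := ZMod.natCast_self _
    push_cast at h0
    linear_combination h0
  have hs3 : ((colourOf M a b : ZMod (m+2)) + (colourOf M b c) + (colourOf M c a))
      = (m : ZMod (m+2)) - 1 := by
    rcases H with H | H
    · have := congrArg (fun z : ℤ => (z : ZMod (m+2))) H
      push_cast at this
      linear_combination this
    · have := congrArg (fun z : ℤ => (z : ZMod (m+2))) H
      push_cast at this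
      rw [hm] at this ⊢
      linear_combination -this
  rw [fc, fc, fc]
  push_cast
  rw [hm] at hs3
  linear_combination hs3

lemma fc_one (hQ : IsColouredQuiver M) (hs : IsSimpleCQ M) {i j : V}
    (h : M i j 0 ≠ 0) : fc M i j = 1 := by
  rw [fc, colour_zero hQ hs h]
  norm_num

end Basics

section Merge

variable {m : ℕ} {M : V → V → Fin (m + 1) → ℕ}

lemma merge_adj (hQ : IsColouredQuiver M) (hc1 : Cond1 M) {v A B C : V}
    (hA : CQAdj M v A) (hB : CQAdj M v B) (hC : CQAdj M v C)
    (hAB : A ≠ B) (hCA : C ≠ A) (hCB : C ≠ B)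
    (hAC : CQAdj M A C) (hBC : CQAdj M B C) : CQAdj M A B := by
  obtain ⟨vR, vK, hvR, hvK, hRcl, hKcl, -, -, -, hcov, hno⟩ :=
    hc1 v ⟨A, hA⟩
  have hAv : A ≠ v := fun h => hA.1 h.symm
  have hBv : B ≠ v := fun h => hB.1 h.symm
  have hCv : C ≠ v := fun h => hC.1 h.symm
  have hAm : A ∈ vR ∨ A ∈ vK := hcov A hA
  have hBm : B ∈ vR ∨ B ∈ vK := hcov B hB
  have hCm : C ∈ vR ∨ C ∈ vK := hcov C hC
  rcases hAm with hAm | hAm <;> rcases hBm with hBm | hBm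
  · exact hRcl (Finset.mem_coe.mpr hAm) (Finset.mem_coe.mpr hBm) hAB
  · -- A ∈ R, B ∈ K
    rcases hCm with hCm | hCm
    · exact absurd hBC (fun h => hno C hCm hCv B hBm hBv (adj_symm hQ h))
    · exact absurd hAC (fun h => hno A hAm hAv C hCm hCv h)
  · -- A ∈ K, B ∈ R
    rcases hCm with hCm | hCm
    · exact absurd hAC (fun h => hno C hCm hCv A hAm hAv (adj_symm hQ h))
    · exact absurd hBC (fun h => hno B hBm hBv C hCm hCv h)
  · exact hKcl (Finset.mem_coe.mpr hAm) (Finset.mem_coe.mpr hBm) hAB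

end Merge

section CycleClique

variable {m : ℕ} {M : V → V → Fin (m + 1) → ℕ}

lemma mod_helper {n k : ℕ} (hk : 0 < k) (hn : n ≤ k) : n % k = if n = k then 0 else n := by
  split
  · next h => rw [h, Nat.mod_self]
  · next h => exact Nat.mod_eq_of_lt (by omega)

lemma cycle_clique (hQ : IsColouredQuiver M) (hnh : ¬ HasHole M) (hc1 : Cond1 M) :
    ∀ k : ℕ, 3 ≤ k → ∀ x : Fin k → V, Function.Injective x →
      (∀ i, CQAdj M (x i) (x (cyc i))) →
      ∀ i j : Fin k, i ≠ j → CQAdj M (x i) (x j) := by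
  intro k
  induction k using Nat.strong_induction_on with
  | _ k IH =>
  intro hk3 x hinj hcons
  by_cases hk : k = 3
  · subst hk
    intro i j hij
    have key : ∀ s t : Fin 3, t = cyc s → CQAdj M (x s) (x t) := fun s t h => h ▸ hcons s
    have hv : j.val = (i.val + 1) % 3 ∨ i.val = (j.val + 1) % 3 := by
      have hi := i.isLt
      have hj := j.isLt
      have : i.val ≠ j.val := fun h => hij (Fin.ext h)
      omega
    rcases hv with h | h
    · exact key i j (Fin.ext h)
    · exact adj_symm hQ (key j i (Fin.ext h))
  -- now k ≥ 4
  have hk4 : 4 ≤ k := by omega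
  haveI : NeZero k := ⟨by omega⟩
  haveI : Fact (1 < k) := ⟨by omega⟩
  -- reindex over ZMod k to find a chord using hole-freeness
  set y : ZMod k → V := fun i => x ⟨i.val, ZMod.val_lt i⟩ with hy
  have hyinj : Function.Injective y := by
    intro a b h
    exact ZMod.val_injective k (congrArg Fin.val (hinj h))
  have hycons : ∀ i : ZMod k, CQAdj M (y i) (y (i + 1)) := by
    intro i
    have h1 : (⟨(i + 1).val, ZMod.val_lt _⟩ : Fin k) = cyc ⟨i.val, ZMod.val_lt i⟩ := by
      apply Fin.ext
      show (i + 1).val = (i.val + 1) % k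
      rw [ZMod.val_add, ZMod.val_one]
    show CQAdj M (x ⟨i.val, ZMod.val_lt i⟩) (x ⟨(i+1).val, ZMod.val_lt _⟩)
    rw [h1]
    exact hcons _
  have hchord : ∃ a b : ZMod k, a ≠ b ∧ b ≠ a + 1 ∧ a ≠ b + 1 ∧ CQAdj M (y a) (y b) := by
    by_contra hcon
    push_neg at hcon
    exact hnh ⟨k, by omega, y, hyinj, hycons, fun i j h1 h2 h3 => hcon i j h1 h2 h3⟩
  obtain ⟨a, b, hab, hba1, hab1, hchadj⟩ := hchord
  -- rotate the cycle so that the chord starts at position 0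
  set w : Fin k → V := fun t => y (a + (t.val : ZMod k)) with hw
  have hwinj : Function.Injective w := by
    intro s t h
    have h3 : (s.val : ZMod k) = t.val := by
      have h2 : a + (s.val : ZMod k) = a + t.val := hyinj h
      exact add_left_cancel h2
    have h4 : s.val = t.val := by
      have := congrArg ZMod.val h3
      rwa [ZMod.val_cast_of_lt s.isLt, ZMod.val_cast_of_lt t.isLt] at this
    exact Fin.ext h4
  have hwcons : ∀ t : Fin k, CQAdj M (w t) (w (cyc t)) := by
    intro t
    have h2 : w (cyc t) = y (a + t.val + 1) := by
      show y _ = y _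
      congr 1
      show a + (((t.val + 1) % k : ℕ) : ZMod k) = a + t.val + 1
      rw [ZMod.natCast_mod]
      push_cast
      ring
    rw [h2]
    exact hycons (a + t.val)
  set d : ZMod k := b - a with hd
  have hd0 : d ≠ 0 := sub_ne_zero.mpr (Ne.symm hab)
  have hd1 : d ≠ 1 := by
    intro h
    exact hba1 (by rw [sub_eq_iff_eq_add.mp h]; ring)
  have hdm : d ≠ -1 := by
    intro h
    exact hab1 (by rw [sub_eq_iff_eq_add.mp h]; ring)
  set j0 : ℕ := d.val with hj0
  have hj0k : j0 < k := ZMod.val_lt d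
  have hj0ne0 : j0 ≠ 0 := by
    intro h
    exact hd0 (by rw [← ZMod.natCast_zmod_val d, ← hj0, h]; simp)
  have hj0ne1 : j0 ≠ 1 := by
    intro h
    exact hd1 (by rw [← ZMod.natCast_zmod_val d, ← hj0, h]; simp)
  have hj0nekm1 : j0 ≠ k - 1 := by
    intro h
    apply hdm
    rw [← ZMod.natCast_zmod_val d, ← hj0, h]
    have hcast : ((k - 1 : ℕ) : ZMod k) + 1 = 0 := by
      have he : ((k - 1 + 1 : ℕ) : ZMod k) = 0 := by
        have he2 : k - 1 + 1 = k := by omega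
        rw [he2, ZMod.natCast_self]
      push_cast at he
      linear_combination he
    linear_combination hcast
  have hj02 : 2 ≤ j0 := by omega
  have hj0km2 : j0 ≤ k - 2 := by omega
  set z0 : Fin k := ⟨0, by omega⟩ with hz0
  set jj : Fin k := ⟨j0, hj0k⟩ with hjj
  have hwz0 : w z0 = y a := by
    show y (a + ((0 : ℕ) : ZMod k)) = y a
    norm_num
  have hwjj : w jj = y b := by
    show y (a + ((j0 : ℕ) : ZMod k)) = y b
    rw [hj0, ZMod.natCast_zmod_val]
    congr 1
    rw [hd]
    ring
  have hchord' : CQAdj M (w z0) (w jj) := by rw [hwz0, hwjj]; exact hchadj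
  -- part 1 of the split cycle : w 0, w 1, ..., w j0
  set p1 : Fin (j0 + 1) → V := fun t => w ⟨t.val, by omega⟩ with hp1
  have hp1inj : Function.Injective p1 := by
    intro s t h
    have h2 := congrArg Fin.val (hwinj h)
    exact Fin.ext h2
  have hp1cons : ∀ t : Fin (j0 + 1), CQAdj M (p1 t) (p1 (cyc t)) := by
    intro t
    have htlt := t.isLt
    rcases Nat.lt_or_ge t.val j0 with h | h
    · have hcv : (cyc t).val = t.val + 1 := Nat.mod_eq_of_lt (by omega)
      have e1 : p1 (cyc t) = w (cyc ⟨t.val, by omega⟩) := by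
        show w _ = w _
        congr 1
        apply Fin.ext
        show (cyc t).val = (t.val + 1) % k
        rw [hcv, Nat.mod_eq_of_lt (by omega)]
      rw [e1]
      exact hwcons _
    · have ht : t.val = j0 := by omega
      have hcv : (cyc t).val = 0 := by
        show (t.val + 1) % (j0 + 1) = 0
        rw [ht, Nat.mod_self]
      have e1 : p1 t = w jj := by
        show w _ = w _
        congr 1
        exact Fin.ext ht
      have e2 : p1 (cyc t) = w z0 := by
        show w _ = w _
        congr 1
        exact Fin.ext hcv
      rw [e1, e2]
      exact adj_symm hQ hchord'
  have P1 := IH (j0 + 1) (by omega) (by omega) p1 hp1inj hp1cons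
  -- part 2 of the split cycle : w j0, w (j0+1), ..., w (k-1), w 0
  set L : ℕ := k - j0 + 1 with hL
  set p2 : Fin L → V := fun t => w ⟨(j0 + t.val) % k, Nat.mod_lt _ (by omega)⟩ with hp2
  have hp2idx : ∀ t : Fin L, (j0 + t.val) % k = if j0 + t.val = k then 0 else j0 + t.val := by
    intro t
    have := t.isLt
    exact mod_helper (by omega) (by omega)
  have hp2inj : Function.Injective p2 := by
    intro s t h
    have h2 := congrArg Fin.val (hwinj h)
    simp only [] at h2
    rw [hp2idx s, hp2idx t] at h2
    apply Fin.ext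
    have hs := s.isLt
    have ht := t.isLt
    split at h2 <;> split at h2 <;> omega
  have hp2cons : ∀ t : Fin L, CQAdj M (p2 t) (p2 (cyc t)) := by
    intro t
    have htlt := t.isLt
    rcases Nat.lt_or_ge t.val (k - j0) with h | h
    · have hcv : (cyc t).val = t.val + 1 := Nat.mod_eq_of_lt (by omega)
      have e0 : p2 t = w ⟨j0 + t.val, by omega⟩ := by
        show w _ = w _
        congr 1
        exact Fin.ext (Nat.mod_eq_of_lt (by omega))
      have e1 : p2 (cyc t) = w (cyc ⟨j0 + t.val, by omega⟩) := by
        show w _ = w _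
        congr 1
        apply Fin.ext
        show (j0 + (cyc t).val) % k = (j0 + t.val + 1) % k
        rw [hcv, Nat.add_assoc]
      rw [e0, e1]
      exact hwcons _
    · have ht : t.val = k - j0 := by omega
      have hcv : (cyc t).val = 0 := by
        show (t.val + 1) % L = 0
        have : t.val + 1 = L := by omega
        rw [this, Nat.mod_self]
      have e1 : p2 t = w z0 := by
        show w _ = w _
        congr 1
        apply Fin.ext
        show (j0 + t.val) % k = 0
        rw [ht]
        have : j0 + (k - j0) = k := by omega
        rw [this, Nat.mod_self]
      have e2 : p2 (cyc t) = w jj := by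
        show w _ = w _
        congr 1
        apply Fin.ext
        show (j0 + (cyc t).val) % k = j0
        rw [hcv]
        exact Nat.mod_eq_of_lt (by omega)
      rw [e1, e2]
      exact hchord'
  have P2 := IH L (by omega) (by omega) p2 hp2inj hp2cons
  -- translate P1 / P2 membership
  have hz0v : z0.val = 0 := rfl
  have hjjv : jj.val = j0 := rfl
  have hpart1 : ∀ s t : Fin k, s.val ≤ j0 → t.val ≤ j0 → s ≠ t → CQAdj M (w s) (w t) := by
    intro s t hs ht hst
    exact P1 ⟨s.val, by omega⟩ ⟨t.val, by omega⟩
      (fun h => hst (by have h2 := congrArg Fin.val h; exact Fin.ext h2))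
  have hp2at : ∀ (s : Fin k) (hb : (if s.val = 0 then k - j0 else s.val - j0) < L),
      s.val = 0 ∨ j0 ≤ s.val →
      p2 ⟨if s.val = 0 then k - j0 else s.val - j0, hb⟩ = w s := by
    intro s hb hs
    show w _ = w _
    congr 1
    apply Fin.ext
    show (j0 + (if s.val = 0 then k - j0 else s.val - j0)) % k = s.val
    have hslt := s.isLt
    split
    · next h =>
      have he : j0 + (k - j0) = k := by omega
      rw [he, Nat.mod_self, h]
    · next h =>
      have h2 : j0 ≤ s.val := by rcases hs with h' | h' <;> omega
      have he : j0 + (s.val - j0) = s.val := by omega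
      rw [he]
      exact Nat.mod_eq_of_lt hslt
  have hpart2 : ∀ s t : Fin k, (s.val = 0 ∨ j0 ≤ s.val) → (t.val = 0 ∨ j0 ≤ t.val) →
      s ≠ t → CQAdj M (w s) (w t) := by
    intro s t hs ht hst
    have hslt := s.isLt
    have htlt := t.isLt
    have hbs : (if s.val = 0 then k - j0 else s.val - j0) < L := by split <;> omega
    have hbt : (if t.val = 0 then k - j0 else t.val - j0) < L := by split <;> omega
    have hvne : s.val ≠ t.val := fun h => hst (Fin.ext h)
    have hidx : (⟨if s.val = 0 then k - j0 else s.val - j0, hbs⟩ : Fin L)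
        ≠ ⟨if t.val = 0 then k - j0 else t.val - j0, hbt⟩ := by
      intro h
      have h2 := congrArg Fin.val h
      simp only [] at h2
      split at h2 <;> split at h2 <;> omega
    have := P2 _ _ hidx
    rwa [hp2at s hbs hs, hp2at t hbt ht] at this
  -- the cross case, via Cond1 at w z0
  have hcross : ∀ s t : Fin k, 0 < s.val → s.val < j0 → j0 < t.val →
      CQAdj M (w s) (w t) := by
    intro s t hs0 hsj hjt
    have htlt := t.isLt
    have hA : CQAdj M (w z0) (w s) := hpart1 z0 s (by omega) (by omega)
      (fun h => by have h2 := congrArg Fin.val h; omega)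
    have hB : CQAdj M (w z0) (w t) := hpart2 z0 t (Or.inl hz0v) (Or.inr (by omega))
      (fun h => by have h2 := congrArg Fin.val h; omega)
    have hC : CQAdj M (w z0) (w jj) := hchord'
    have hAB : w s ≠ w t := fun h => by
      have h2 := congrArg Fin.val (hwinj h); omega
    have hCA : w jj ≠ w s := fun h => by
      have h2 := congrArg Fin.val (hwinj h); omega
    have hCB : w jj ≠ w t := fun h => by
      have h2 := congrArg Fin.val (hwinj h); omega
    have hAC : CQAdj M (w s) (w jj) := hpart1 s jj (by omega) (by omega)
      (fun h => by have h2 := congrArg Fin.val h; omega)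
    have hBC : CQAdj M (w t) (w jj) := hpart2 t jj (Or.inr (by omega)) (Or.inr (by omega))
      (fun h => by have h2 := congrArg Fin.val h; omega)
    exact merge_adj hQ hc1 hA hB hC hAB hCA hCB hAC hBC
  have hwall : ∀ s t : Fin k, s ≠ t → CQAdj M (w s) (w t) := by
    intro s t hst
    have hslt := s.isLt
    have htlt := t.isLt
    by_cases hs1 : 0 < s.val ∧ s.val < j0 <;> by_cases ht1 : 0 < t.val ∧ t.val < j0
    · exact hpart1 s t (by omega) (by omega) hst
    · have : t.val = 0 ∨ t.val = j0 ∨ j0 < t.val := by omega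
      rcases this with h | h | h
      · exact hpart1 s t (by omega) (by omega) hst
      · exact hpart1 s t (by omega) (by omega) hst
      · exact hcross s t (by omega) (by omega) h
    · have : s.val = 0 ∨ s.val = j0 ∨ j0 < s.val := by omega
      rcases this with h | h | h
      · exact hpart1 s t (by omega) (by omega) hst
      · exact hpart1 s t (by omega) (by omega) hst
      · exact adj_symm hQ (hcross t s (by omega) (by omega) h)
    · exact hpart2 s t (by omega) (by omega) hst
  -- transfer back to x
  intro i j hij
  set ψ : Fin k → Fin k := fun t => ⟨((t.val : ZMod k) - a).val, ZMod.val_lt _⟩ with hψ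
  have hwψ : ∀ t : Fin k, w (ψ t) = x t := by
    intro t
    show y (a + ((((t.val : ZMod k) - a).val : ℕ) : ZMod k)) = x t
    rw [ZMod.natCast_zmod_val]
    have he : a + ((t.val : ZMod k) - a) = (t.val : ZMod k) := by ring
    rw [he]
    show x ⟨((t.val : ZMod k)).val, _⟩ = x t
    congr 1
    exact Fin.ext (ZMod.val_cast_of_lt t.isLt)
  have hψne : ψ i ≠ ψ j := by
    intro h
    apply hij
    have h1 : ((i.val : ZMod k) - a).val = ((j.val : ZMod k) - a).val := congrArg Fin.val h
    have h2 : (i.val : ZMod k) - a = (j.val : ZMod k) - a := ZMod.val_injective k h1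
    have h3 : (i.val : ZMod k) = (j.val : ZMod k) := by linear_combination h2
    have h4 := congrArg ZMod.val h3
    rw [ZMod.val_cast_of_lt i.isLt, ZMod.val_cast_of_lt j.isLt] at h4
    exact Fin.ext h4
  have := hwall (ψ i) (ψ j) hψne
  rwa [hwψ, hwψ] at this

end CycleClique

/-- The quiver of an `m`-cluster tilted algebra of type `Aₙ` (the `0`-coloured
part of a quiver in `𝒬ₙᵐ`): every vertex is the source of at most two arrows and
the target of at most two arrows, and the only cycles in it are oriented cycles
of length `m + 2`. -/
theorem zero_coloured_part_properties (m : ℕ) (hm : 1 ≤ m)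
    (V : Type) [Fintype V] [DecidableEq V]
    (M : V → V → Fin (m + 1) → ℕ) (hM : MemQClass M) :
    (∀ v : V, {u : V | M v u 0 ≠ 0}.ncard ≤ 2 ∧ {u : V | M u v 0 ≠ 0}.ncard ≤ 2) ∧
    (∀ k : ℕ, 3 ≤ k → ∀ x : Fin k → V, Function.Injective x →
      (∀ i : Fin k, M (x i) (x (cyc i)) 0 ≠ 0 ∨ M (x (cyc i)) (x i) 0 ≠ 0) →
      k = m + 2 ∧
        ((∀ i : Fin k, M (x i) (x (cyc i)) 0 ≠ 0) ∨
          (∀ i : Fin k, M (x (cyc i)) (x i) 0 ≠ 0))) := by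
  obtain ⟨hQ, hs, hconn, hnh, hc1, hc2⟩ := hM
  constructor
  · -- degree bounds
    intro v
    have key : ∀ (S : Set V) (γ : ℕ), (∀ u ∈ S, CQAdj M v u ∧ colourOf M v u = γ) →
        S.ncard ≤ 2 := by
      intro S γ hSc
      by_contra hlt
      have h3 : 2 < S.ncard := by omega
      rw [Set.two_lt_ncard (Set.toFinite S)] at h3
      obtain ⟨u1, hu1, u2, hu2, u3, hu3, h12, h13, h23⟩ := h3
      obtain ⟨R, K, hvR, hvK, hRcl, hKcl, -, -, -, hcov, -⟩ := hc1 v ⟨u1, (hSc u1 hu1).1⟩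
      have hm1 : u1 ∈ R ∨ u1 ∈ K := hcov u1 (hSc u1 hu1).1
      have hm2 : u2 ∈ R ∨ u2 ∈ K := hcov u2 (hSc u2 hu2).1
      have hm3 : u3 ∈ R ∨ u3 ∈ K := hcov u3 (hSc u3 hu3).1
      have pair : ∃ a b : V, a ∈ S ∧ b ∈ S ∧ a ≠ b ∧ CQAdj M a b := by
        rcases hm1 with h1 | h1 <;> rcases hm2 with h2 | h2 <;> rcases hm3 with h3' | h3'
        · exact ⟨u1, u2, hu1, hu2, h12, hRcl (Finset.mem_coe.mpr h1) (Finset.mem_coe.mpr h2) h12⟩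
        · exact ⟨u1, u2, hu1, hu2, h12, hRcl (Finset.mem_coe.mpr h1) (Finset.mem_coe.mpr h2) h12⟩
        · exact ⟨u1, u3, hu1, hu3, h13, hRcl (Finset.mem_coe.mpr h1) (Finset.mem_coe.mpr h3') h13⟩
        · exact ⟨u2, u3, hu2, hu3, h23, hKcl (Finset.mem_coe.mpr h2) (Finset.mem_coe.mpr h3') h23⟩
        · exact ⟨u2, u3, hu2, hu3, h23, hRcl (Finset.mem_coe.mpr h2) (Finset.mem_coe.mpr h3') h23⟩
        · exact ⟨u1, u3, hu1, hu3, h13, hKcl (Finset.mem_coe.mpr h1) (Finset.mem_coe.mpr h3') h13⟩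
        · exact ⟨u1, u2, hu1, hu2, h12, hKcl (Finset.mem_coe.mpr h1) (Finset.mem_coe.mpr h2) h12⟩
        · exact ⟨u1, u2, hu1, hu2, h12, hKcl (Finset.mem_coe.mpr h1) (Finset.mem_coe.mpr h2) h12⟩
      obtain ⟨a, b, haS, hbS, hab, hadj⟩ := pair
      obtain ⟨hva, hca⟩ := hSc a haS
      obtain ⟨hvb, hcb⟩ := hSc b hbS
      have hfab := fc_tri hQ hs hc2 hva.1 hab hvb.1 hva hadj hvb
      have h1 : fc M v a = fc M v b := by rw [fc, fc, hca, hcb]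
      have h2 : fc M v b + fc M b v = 0 := fc_skew hQ hs hvb
      have h0 : fc M a b = 0 := by linear_combination hfab - h1 - h2
      exact fc_ne_zero hs a b h0
    constructor
    · apply key _ 0
      intro u hu
      exact ⟨adj_of_zero hQ hu, colour_zero hQ hs hu⟩
    · apply key _ m
      intro u hu
      have hadj : CQAdj M v u := adj_symm hQ (adj_of_zero hQ hu)
      have h0 : colourOf M u v = 0 := colour_zero hQ hs hu
      have hadd := colour_add hQ hs hadj
      exact ⟨hadj, by omega⟩
  · -- cycles
    intro k hk3 x hinj hx
    have hkpos : 0 < k := by omega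
    have hcycv : ∀ i : Fin k, (cyc i).val = if i.val + 1 = k then 0 else i.val + 1 :=
      fun i => mod_helper hkpos (by have := i.isLt; omega)
    have cyc_ne : ∀ i : Fin k, i ≠ cyc i := by
      intro i h
      have hv := congrArg Fin.val h
      rw [hcycv i] at hv
      have := i.isLt
      split at hv <;> omega
    have hcyc2 : ∀ i : Fin k, cyc (cyc i) ≠ i := by
      intro i h
      have h1 := congrArg Fin.val h
      have e1 := hcycv i
      have e2 := hcycv (cyc i)
      have hik := i.isLt
      have hck := (cyc i).isLt
      split at e1 <;> split at e2 <;> omega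
    have hcons : ∀ i, CQAdj M (x i) (x (cyc i)) := by
      intro i
      rcases hx i with h | h
      · exact adj_of_zero hQ h
      · exact adj_symm hQ (adj_of_zero hQ h)
    have hcl := cycle_clique hQ hnh hc1 k hk3 x hinj hcons
    set z0 : Fin k := ⟨0, hkpos⟩ with hz0
    set q : Fin k → ZMod (m + 2) := fun i => if i = z0 then 0 else fc M (x z0) (x i) with hq
    have hqz : q z0 = 0 := by simp [hq]
    have hqnz : ∀ i, i ≠ z0 → q i = fc M (x z0) (x i) := fun i h => by simp [hq, h]
    have hqsub : ∀ i j : Fin k, i ≠ j → q j - q i = fc M (x i) (x j) := by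
      intro i j hij
      by_cases hi : i = z0
      · subst hi
        rw [hqz, hqnz j (fun h => hij h.symm), sub_zero]
      · by_cases hj : j = z0
        · subst hj
          rw [hqz, hqnz i hi]
          have hsk := fc_skew hQ hs (hcl i z0 hi)
          linear_combination -hsk
        · rw [hqnz i hi, hqnz j hj]
          have hxne1 : x z0 ≠ x i := hinj.ne (fun h => hi h.symm)
          have hxne2 : x i ≠ x j := hinj.ne hij
          have hxne3 : x z0 ≠ x j := hinj.ne (fun h => hj h.symm)
          have htri := fc_tri hQ hs hc2 hxne1 hxne2 hxne3
            (hcl z0 i (fun h => hi h.symm)) (hcl i j hij) (hcl z0 j (fun h => hj h.symm))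
          have hsk := fc_skew hQ hs (hcl z0 j (fun h => hj h.symm))
          linear_combination hsk - htri
    have hqinj : Function.Injective q := by
      intro i j h
      by_contra hij
      have h1 := hqsub i j hij
      rw [h, sub_self] at h1
      exact fc_ne_zero hs _ _ h1.symm
    have hk2 : k ≤ m + 2 := by
      have hcard := Fintype.card_le_of_injective q hqinj
      rwa [Fintype.card_fin, ZMod.card] at hcard
    have hstepf : ∀ i : Fin k, M (x i) (x (cyc i)) 0 ≠ 0 → q (cyc i) = q i + 1 := by
      intro i h
      have h1 := hqsub i (cyc i) (cyc_ne i)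
      rw [fc_one hQ hs h] at h1
      linear_combination h1
    have hstepb : ∀ i : Fin k, M (x (cyc i)) (x i) 0 ≠ 0 → q i = q (cyc i) + 1 := by
      intro i h
      have h1 := hqsub (cyc i) i (Ne.symm (cyc_ne i))
      rw [fc_one hQ hs h] at h1
      linear_combination h1
    have two_ne : (2 : ZMod (m + 2)) ≠ 0 := by
      intro h
      have h2 : ((2 : ℕ) : ZMod (m + 2)) = 0 := by exact_mod_cast h
      rw [ZMod.natCast_eq_zero_iff] at h2
      have := Nat.le_of_dvd (by norm_num) h2
      omega
    have hnotboth : ∀ i : Fin k, q (cyc i) = q i + 1 → q i = q (cyc i) + 1 → False := by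
      intro i h1 h2
      exact two_ne (by linear_combination -h1 - h2)
    have hdir : ∀ i, q (cyc i) = q i + 1 ∨ q i = q (cyc i) + 1 :=
      fun i => (hx i).imp (hstepf i) (hstepb i)
    set cI : ℕ → Fin k := fun n => ⟨n % k, Nat.mod_lt _ hkpos⟩ with hcI
    have hcI0 : cI 0 = z0 := Fin.ext (Nat.zero_mod k)
    have hcIk : cI k = z0 := Fin.ext (Nat.mod_self k)
    have hcIsucc : ∀ n, cyc (cI n) = cI (n + 1) := by
      intro n
      apply Fin.ext
      show (n % k + 1) % k = (n + 1) % k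
      exact Nat.mod_add_mod n k 1
    have hcIid : ∀ i : Fin k, cI i.val = i := fun i => Fin.ext (Nat.mod_eq_of_lt i.isLt)
    have hprop : ∀ i : Fin k, q (cyc i) = q i + 1 → q (cyc (cyc i)) = q (cyc i) + 1 := by
      intro i h1
      rcases hdir (cyc i) with h2 | h2
      · exact h2
      · exfalso
        have h3 : q (cyc (cyc i)) = q i := by linear_combination h1 - h2
        exact hcyc2 i (hqinj h3)
    have hpropb : ∀ i : Fin k, q i = q (cyc i) + 1 → q (cyc i) = q (cyc (cyc i)) + 1 := by
      intro i h1
      rcases hdir (cyc i) with h2 | h2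
      · exfalso
        have h3 : q (cyc (cyc i)) = q i := by linear_combination h2 - h1
        exact hcyc2 i (hqinj h3)
      · exact h2
    rcases hdir z0 with h0 | h0
    · -- all arrows point forwards
      have hall : ∀ n : ℕ, q (cyc (cI n)) = q (cI n) + 1 := by
        intro n
        induction n with
        | zero => rw [hcI0]; exact h0
        | succ n ih =>
          have h1 := hprop (cI n) ih
          rwa [hcIsucc n] at h1
      have htel : ∀ n : ℕ, q (cI n) = q z0 + n := by
        intro n
        induction n with
        | zero => rw [hcI0]; simp
        | succ n ih =>
          rw [← hcIsucc n, hall n, ih]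
          push_cast
          ring
      have hdvd : (m + 2) ∣ k := by
        have h1 := htel k
        rw [hcIk] at h1
        have h3 : ((k : ℕ) : ZMod (m + 2)) = 0 := by linear_combination -h1
        rwa [ZMod.natCast_eq_zero_iff] at h3
      have hkeq : k = m + 2 := le_antisymm hk2 (Nat.le_of_dvd (by omega) hdvd)
      refine ⟨hkeq, Or.inl fun i => ?_⟩
      rcases hx i with h | h
      · exact h
      · exfalso
        have h1 : q (cyc i) = q i + 1 := by rw [← hcIid i]; exact hall i.val
        exact hnotboth i h1 (hstepb i h)
    · -- all arrows point backwards
      have hall : ∀ n : ℕ, q (cI n) = q (cyc (cI n)) + 1 := by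
        intro n
        induction n with
        | zero => rw [hcI0]; exact h0
        | succ n ih =>
          have h1 := hpropb (cI n) ih
          rwa [hcIsucc n] at h1
      have htel : ∀ n : ℕ, q (cI n) + n = q z0 := by
        intro n
        induction n with
        | zero => rw [hcI0]; simp
        | succ n ih =>
          have h1 := hall n
          rw [hcIsucc n] at h1
          rw [← ih, h1]
          push_cast
          ring
      have hdvd : (m + 2) ∣ k := by
        have h1 := htel k
        rw [hcIk] at h1
        have h3 : ((k : ℕ) : ZMod (m + 2)) = 0 := by linear_combination h1
        rwa [ZMod.natCast_eq_zero_iff] at h3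
      have hkeq : k = m + 2 := le_antisymm hk2 (Nat.le_of_dvd (by omega) hdvd)
      refine ⟨hkeq, Or.inr fun i => ?_⟩
      rcases hx i with h | h
      · exfalso
        have h1 : q i = q (cyc i) + 1 := by rw [← hcIid i]; exact hall i.val
        exact hnotboth i (hstepf i h) h1
      · exact h

end MutClassAn
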